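/- There exists a Banach space X such that every nonzero element x ∈ X has D(x) < 2 (i.e., every nonzero element is approximately smooth), but 𝒟(X) = 2 (the space is not approximately smooth). Concretely, if (X_n) are Banach spaces with 𝒟(X_n) = 2 − 1/n, then X = ⊕_p X_n for any 1 < p < ∞ has this property. -/

import Mathlib

open scoped ENNReal

noncomputable def scrD (X : Type*) [NormedAddCommGroup X] [NormedSpace ℝ X] : ℝ :=
  sSup ((fun x : X => Metric.diam {f : X →L[ℝ] ℝ | ‖f‖ = 1 ∧ f x = ‖x‖}) '' {x | x ≠ 0})

section Aux
variable {X : Type*} [NormedAddCommGroup X] [NormedSpace ℝ X]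

lemma Jset_bounded (x : X) :
    Bornology.IsBounded {f : X →L[ℝ] ℝ | ‖f‖ = 1 ∧ f x = ‖x‖} := by
  apply Bornology.IsBounded.subset (Metric.isBounded_closedBall (x := (0 : X →L[ℝ] ℝ)) (r := 1))
  intro f hf
  simp [Metric.mem_closedBall, dist_eq_norm, hf.1]

lemma diam_Jset_le_two (x : X) :
    Metric.diam {f : X →L[ℝ] ℝ | ‖f‖ = 1 ∧ f x = ‖x‖} ≤ 2 := by
  refine Metric.diam_le_of_forall_dist_le (by norm_num) ?_
  intro f hf g hg
  calc dist f g = ‖f - g‖ := dist_eq_norm _ _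
    _ ≤ ‖f‖ + ‖g‖ := norm_sub_le _ _
    _ ≤ 2 := by rw [hf.1, hg.1]; norm_num

lemma bddAbove_scrD_set :
    BddAbove ((fun x : X => Metric.diam {f : X →L[ℝ] ℝ | ‖f‖ = 1 ∧ f x = ‖x‖}) '' {x | x ≠ 0}) := by
  refine ⟨2, ?_⟩
  rintro y ⟨x, -, rfl⟩
  exact diam_Jset_le_two x

lemma diam_le_scrD {x : X} (hx : x ≠ 0) :
    Metric.diam {f : X →L[ℝ] ℝ | ‖f‖ = 1 ∧ f x = ‖x‖} ≤ scrD X :=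
  le_csSup bddAbove_scrD_set ⟨x, hx, rfl⟩

lemma scrD_le_two [Nontrivial X] : scrD X ≤ 2 := by
  refine csSup_le ?_ ?_
  · obtain ⟨x, hx⟩ := exists_ne (0 : X)
    exact ⟨_, ⟨x, hx, rfl⟩⟩
  · rintro y ⟨x, -, rfl⟩
    exact diam_Jset_le_two x

end Aux

set_option linter.unusedSectionVars false
section Lp
variable {E : ℕ → Type*} [∀ n, NormedAddCommGroup (E n)] [∀ n, NormedSpace ℝ (E n)]
variable (E) in
noncomputable def singleCLM (P : ℝ≥0∞) [Fact (1 ≤ P)] (hP : 0 < P.toReal) (n : ℕ) :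
    E n →L[ℝ] lp E P :=
  LinearMap.mkContinuous
    { toFun := fun a => lp.single P n a
      map_add' := fun a b => by
        refine lp.ext (funext fun j => ?_)
        rw [lp.coeFn_add]
        by_cases hj : j = n
        · subst hj; simp [lp.single_apply_self]
        · simp [lp.single_apply_ne P n _ hj]
      map_smul' := fun c a => lp.single_smul P n c a }
    1 (fun a => by
      have := lp.norm_single (E := E) (p := P) (zero_lt_one.trans_le Fact.out) n a
      simpa using this.le)

lemma singleCLM_apply (P : ℝ≥0∞) [Fact (1 ≤ P)] (hP : 0 < P.toReal) (n : ℕ) (a : E n) :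
    singleCLM E P hP n a = lp.single P n a := rfl

lemma norm_lpsingle (P : ℝ≥0∞) [Fact (1 ≤ P)] (hP : 0 < P.toReal) (n : ℕ) (a : E n) :
    ‖lp.single P n a‖ = ‖a‖ := by
  have := lp.norm_single (E := E) (p := P) (zero_lt_one.trans_le Fact.out) n a
  simpa using this

end Lp

set_option linter.unusedSectionVars false

section Lp2
variable {E : ℕ → Type*} [∀ n, NormedAddCommGroup (E n)] [∀ n, NormedSpace ℝ (E n)]

variable (E) in
noncomputable def projCLM (P : ℝ≥0∞) [Fact (1 ≤ P)] (hP0 : P ≠ 0) (n : ℕ) :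
    lp E P →L[ℝ] E n :=
  LinearMap.mkContinuous
    { toFun := fun y => y n
      map_add' := fun a b => by simp only [lp.coeFn_add, Pi.add_apply]
      map_smul' := fun c a => by simp only [lp.coeFn_smul, Pi.smul_apply, RingHom.id_apply] }
    1 (fun y => by rw [one_mul]; exact lp.norm_apply_le_norm hP0 y n)

lemma projCLM_apply (P : ℝ≥0∞) [Fact (1 ≤ P)] (hP0 : P ≠ 0) (n : ℕ) (y : lp E P) :
    projCLM E P hP0 n y = y n := rfl

end Lp2

set_option linter.unusedSectionVars false
section Core
variable {E : ℕ → Type*} [∀ n, NormedAddCommGroup (E n)] [∀ n, NormedSpace ℝ (E n)]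
variable {P : ℝ≥0∞} [Fact (1 ≤ P)]

lemma norm_update (hp' : 0 < P.toReal) (x : lp E P) (n : ℕ) (v : E n) :
    ‖x + lp.single P n (v - x n)‖ =
      (‖x‖ ^ P.toReal - ‖x n‖ ^ P.toReal + ‖v‖ ^ P.toReal) ^ (1 / P.toReal) := by
  set q := P.toReal
  set x' : lp E P := x + lp.single P n (v - x n) with hx'
  have hco : ∀ j, (x' : ∀ i, E i) j = if h : j = n then (h ▸ v) else x j := by
    intro j
    rw [hx', lp.coeFn_add, Pi.add_apply]
    by_cases hj : j = n
    · subst hj; simp [lp.single_apply_self]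
    · simp [lp.single_apply_ne P n _ hj, hj]
  have hcn : (x' : ∀ i, E i) n = v := by rw [hco]; simp
  have hcj : ∀ j, j ≠ n → (x' : ∀ i, E i) j = x j := by
    intro j hj; rw [hco]; simp [hj]
  have hsum : Summable fun i => ‖x i‖ ^ q := (lp.memℓp x).summable hp'
  have hsum' : Summable fun i => ‖x' i‖ ^ q := (lp.memℓp x').summable hp'
  have t1 := Summable.tsum_eq_add_tsum_ite hsum' n
  have t2 := Summable.tsum_eq_add_tsum_ite hsum n
  have htail : (∑' i, if i = n then 0 else ‖x' i‖ ^ q) =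
      ∑' i, if i = n then 0 else ‖x i‖ ^ q := by
    congr 1; funext i
    by_cases hi : i = n
    · simp [hi]
    · simp [hi, hcj i hi]
  have hpow : ‖x'‖ ^ q = ‖x‖ ^ q - ‖x n‖ ^ q + ‖v‖ ^ q := by
    rw [lp.norm_rpow_eq_tsum hp' x', lp.norm_rpow_eq_tsum hp' x, t1, t2, htail, hcn]
    ring
  have : (‖x'‖ ^ q) ^ (1 / q) = ‖x'‖ := by
    rw [one_div, Real.rpow_rpow_inv (norm_nonneg _) hp'.ne']
  rw [← hpow, this]

lemma subgrad (hp' : 0 < P.toReal) (x : lp E P) (f : lp E P →L[ℝ] ℝ)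
    (hf1 : ‖f‖ = 1) (hfx : f x = ‖x‖) (n : ℕ) (v : E n) :
    ‖x‖ + ((f.comp (singleCLM E P hp' n)) v - (f.comp (singleCLM E P hp' n)) (x n)) ≤
      (‖x‖ ^ P.toReal - ‖x n‖ ^ P.toReal + ‖v‖ ^ P.toReal) ^ (1 / P.toReal) := by
  have key : f (x + lp.single P n (v - x n)) =
      ‖x‖ + ((f.comp (singleCLM E P hp' n)) v - (f.comp (singleCLM E P hp' n)) (x n)) := by
    rw [map_add, hfx]
    congr 1
    have : lp.single P n (v - x n) = singleCLM E P hp' n v - singleCLM E P hp' n (x n) := by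
      rw [← map_sub]; rfl
    rw [this, map_sub]
    rfl
  rw [← key, ← norm_update hp' x n v]
  calc f (x + lp.single P n (v - x n)) ≤ ‖f (x + lp.single P n (v - x n))‖ := le_abs_self _
    _ ≤ ‖f‖ * ‖x + lp.single P n (v - x n)‖ := f.le_opNorm _
    _ = _ := by rw [hf1, one_mul]

end Core
section Core2
variable {E : ℕ → Type*} [∀ n, NormedAddCommGroup (E n)] [∀ n, NormedSpace ℝ (E n)]
variable {P : ℝ≥0∞} [Fact (1 ≤ P)]

/-- Value of the coordinate functional at `x n`. -/
lemma coord_value (h1p : 1 < P.toReal) (x : lp E P) (hx : x ≠ 0) (f : lp E P →L[ℝ] ℝ)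
    (hf1 : ‖f‖ = 1) (hfx : f x = ‖x‖) (n : ℕ) :
    (f.comp (singleCLM E P (lt_trans one_pos h1p) n)) (x n) =
      ‖x n‖ ^ (P.toReal - 1) / ‖x‖ ^ (P.toReal - 1) * ‖x n‖ := by
  have hp' : (0:ℝ) < P.toReal := lt_trans one_pos h1p
  set q := P.toReal with hq
  set fn := f.comp (singleCLM E P hp' n) with hfn
  have hxp : (0:ℝ) < ‖x‖ := norm_pos_iff.mpr hx
  by_cases hxn : x n = 0
  · rw [hxn]
    simp
  have ht0 : (0:ℝ) < ‖x n‖ := norm_pos_iff.mpr hxn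
  set t₀ := ‖x n‖ with hht0
  set C := ‖x‖ ^ q - t₀ ^ q with hC
  have hCt : C + t₀ ^ q = ‖x‖ ^ q := by rw [hC]; ring
  have hxq : (0:ℝ) < ‖x‖ ^ q := Real.rpow_pos_of_pos hxp q
  set c := fn (x n) / t₀ with hc
  set F : ℝ → ℝ := fun s => (C + (t₀ + s) ^ q) ^ (1 / q) - ‖x‖ - c * s with hF
  have hF0 : F 0 = 0 := by
    rw [hF]
    simp only [add_zero, mul_zero, hCt]
    rw [one_div, Real.rpow_rpow_inv hxp.le (by positivity), sub_self, sub_zero]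
  have hFpos : ∀ s, -t₀ < s → 0 ≤ F s := by
    intro s hs
    have hsub := subgrad hp' x f hf1 hfx n (((t₀ + s) / t₀) • (x n))
    rw [← hfn] at hsub
    have h1 : fn (((t₀ + s) / t₀) • (x n)) = ((t₀ + s) / t₀) * fn (x n) := by
      rw [map_smul]; rfl
    have h2 : ‖((t₀ + s) / t₀) • (x n)‖ = t₀ + s := by
      have hpos : (0:ℝ) < t₀ + s := by linarith
      rw [norm_smul, Real.norm_eq_abs, abs_of_nonneg (by positivity), ← hht0]
      field_simp
    rw [h1, h2] at hsub
    have h3 : ‖x‖ + ((t₀ + s) / t₀ * fn (x n) - fn (x n)) = ‖x‖ + c * s := by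
      rw [hc]; field_simp; ring
    rw [h3] at hsub
    have h4 : ‖x‖ ^ q - ‖x n‖ ^ q + (t₀ + s) ^ q = C + (t₀ + s) ^ q := by rw [hC, hht0]
    rw [h4] at hsub
    rw [hF]
    dsimp only
    linarith
  have hmin : IsLocalMin F 0 := by
    have hmem : Set.Ioo (-t₀) t₀ ∈ nhds (0:ℝ) := Ioo_mem_nhds (by linarith) ht0
    rw [IsLocalMin, IsMinFilter, hF0]
    filter_upwards [hmem] with s hs
    exact hFpos s hs.1
  have hderiv : HasDerivAt F (1 * q * (t₀ + 0) ^ (q - 1) * (1 / q) *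
      (C + (t₀ + 0) ^ q) ^ (1 / q - 1) - c) 0 := by
    have g1 : HasDerivAt (fun s : ℝ => t₀ + s) 1 0 := (hasDerivAt_id 0).const_add t₀
    have g2 : HasDerivAt (fun s : ℝ => (t₀ + s) ^ q) (1 * q * (t₀ + 0) ^ (q - 1)) 0 :=
      g1.rpow_const (Or.inl (by positivity))
    have g3 : HasDerivAt (fun s : ℝ => C + (t₀ + s) ^ q) (1 * q * (t₀ + 0) ^ (q - 1)) 0 :=
      g2.const_add C
    have g4 : HasDerivAt (fun s : ℝ => (C + (t₀ + s) ^ q) ^ (1 / q))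
        (1 * q * (t₀ + 0) ^ (q - 1) * (1 / q) * (C + (t₀ + 0) ^ q) ^ (1 / q - 1)) 0 := by
      have h8 := g3.rpow_const (p := 1 / q) (Or.inl (by rw [add_zero, hCt]; positivity))
      exact h8
    have g5 : HasDerivAt (fun s : ℝ => ‖x‖ + c * s) c 0 := by
      simpa using ((hasDerivAt_id (0:ℝ)).const_mul c).const_add ‖x‖
    have h6 := g4.sub g5
    have heq : F = fun s => (C + (t₀ + s) ^ q) ^ (1 / q) - (‖x‖ + c * s) := by
      funext s; rw [hF]; ring
    rw [heq]
    exact h6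
  have hzero := hmin.hasDerivAt_eq_zero hderiv
  have hcval : c = t₀ ^ (q - 1) * (‖x‖ ^ q) ^ (1 / q - 1) := by
    rw [add_zero, hCt] at hzero
    have hq0 : q ≠ 0 := by positivity
    have h7 : c = 1 * q * t₀ ^ (q - 1) * (1 / q) * (‖x‖ ^ q) ^ (1 / q - 1) := by linarith
    rw [h7]
    field_simp
  have hsimp : (‖x‖ ^ q) ^ (1 / q - 1) = (‖x‖ ^ (q - 1))⁻¹ := by
    rw [← Real.rpow_mul hxp.le, ← Real.rpow_neg hxp.le]
    congr 1
    field_simp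
    ring
  have hfin : fn (x n) = c * t₀ := by rw [hc]; field_simp
  rw [hfin, hcval, hsimp, ← hq, div_eq_mul_inv]

end Core2
section Core3
open Filter
variable {E : ℕ → Type*} [∀ n, NormedAddCommGroup (E n)] [∀ n, NormedSpace ℝ (E n)]
variable {P : ℝ≥0∞} [Fact (1 ≤ P)]

lemma coord_norm (h1p : 1 < P.toReal) (x : lp E P) (hx : x ≠ 0) (f : lp E P →L[ℝ] ℝ)
    (hf1 : ‖f‖ = 1) (hfx : f x = ‖x‖) (n : ℕ) :
    ‖f.comp (singleCLM E P (lt_trans one_pos h1p) n)‖ ≤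
      ‖x n‖ ^ (P.toReal - 1) / ‖x‖ ^ (P.toReal - 1) := by
  have hp' : (0:ℝ) < P.toReal := lt_trans one_pos h1p
  set q := P.toReal with hq
  set fn := f.comp (singleCLM E P hp' n) with hfn
  have hxp : (0:ℝ) < ‖x‖ := norm_pos_iff.mpr hx
  set a := ‖x n‖ ^ (q - 1) / ‖x‖ ^ (q - 1) with ha
  have ha0 : 0 ≤ a := by positivity
  have hq1 : q - 1 ≠ 0 := by dsimp only [q]; linarith
  have hbound : ∀ v : E n, fn v ≤ a * ‖v‖ := by
    intro v
    by_cases hv : v = 0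
    · simp [hv]
    have hvp : (0:ℝ) < ‖v‖ := norm_pos_iff.mpr hv
    by_cases hxn : x n = 0
    · -- here a = 0; show fn v ≤ 0
      have ha' : a = 0 := by
        rw [ha, hxn, norm_zero, Real.zero_rpow hq1, zero_div]
      rw [ha', zero_mul]
      set φ : ℝ → ℝ := fun t => (‖x‖ ^ q + t ^ q) ^ (1 / q) with hφ
      have hφ0 : φ 0 = ‖x‖ := by
        rw [hφ]
        simp only [Real.zero_rpow hp'.ne', add_zero]
        rw [one_div, Real.rpow_rpow_inv hxp.le hp'.ne']
      have hder : HasDerivAt φ 0 0 := by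
        have g1 : HasDerivAt (fun t : ℝ => t ^ q) (q * (0:ℝ) ^ (q - 1)) 0 :=
          Real.hasDerivAt_rpow_const (Or.inr h1p.le)
        have g2 : HasDerivAt (fun t : ℝ => ‖x‖ ^ q + t ^ q) (q * (0:ℝ) ^ (q - 1)) 0 :=
          g1.const_add _
        have g3 := g2.rpow_const (p := 1 / q)
          (Or.inl (by rw [Real.zero_rpow hp'.ne', add_zero]; positivity))
        convert g3 using 1
        rw [Real.zero_rpow hq1]
        ring
      have hslope : Tendsto (slope φ 0) (nhdsWithin 0 (Set.Ioi 0)) (nhds 0) :=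
        (hasDerivAt_iff_tendsto_slope.mp hder).mono_left
          (nhdsWithin_mono _ (fun t ht => ne_of_gt ht))
      have hev : ∀ᶠ t in nhdsWithin (0:ℝ) (Set.Ioi 0), fn v / ‖v‖ ≤ slope φ 0 t := by
        filter_upwards [self_mem_nhdsWithin] with t (ht : 0 < t)
        have hsub := subgrad hp' x f hf1 hfx n ((t / ‖v‖) • v)
        rw [← hfn, ← hq] at hsub
        have h1 : fn ((t / ‖v‖) • v) = (t / ‖v‖) * fn v := by rw [map_smul]; rfl
        have h2 : ‖(t / ‖v‖) • v‖ = t := by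
          rw [norm_smul, Real.norm_eq_abs, abs_of_nonneg (by positivity)]
          field_simp
        have h3 : fn (x n) = 0 := by rw [hxn, map_zero]
        rw [h1, h2, h3, hxn, norm_zero, Real.zero_rpow hp'.ne'] at hsub
        simp only [sub_zero] at hsub
        have h4 : t / ‖v‖ * fn v ≤ φ t - φ 0 := by
          rw [hφ0, hφ]; dsimp only; linarith
        rw [slope_def_field, sub_zero, le_div_iff₀ ht]
        calc fn v / ‖v‖ * t = t / ‖v‖ * fn v := by ring
          _ ≤ φ t - φ 0 := h4
      have hle := ge_of_tendsto hslope hev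
      calc fn v = fn v / ‖v‖ * ‖v‖ := by field_simp
        _ ≤ 0 * ‖v‖ := mul_le_mul_of_nonneg_right hle hvp.le
        _ = 0 := zero_mul _
    · have hval0 := coord_value h1p x hx f hf1 hfx n
      have hval : fn (x n) = a * ‖x n‖ := by
        rw [hfn, ha, hq]; exact hval0
      have ht0 : (0:ℝ) < ‖x n‖ := norm_pos_iff.mpr hxn
      have hsub := subgrad hp' x f hf1 hfx n ((‖x n‖ / ‖v‖) • v)
      rw [← hfn, ← hq] at hsub
      have h1 : fn ((‖x n‖ / ‖v‖) • v) = (‖x n‖ / ‖v‖) * fn v := by rw [map_smul]; rfl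
      have h2 : ‖(‖x n‖ / ‖v‖) • v‖ = ‖x n‖ := by
        rw [norm_smul, Real.norm_eq_abs, abs_of_nonneg (by positivity)]
        field_simp
      rw [h1, h2] at hsub
      have h3 : ‖x‖ ^ q - ‖x n‖ ^ q + ‖x n‖ ^ q = ‖x‖ ^ q := by ring
      rw [h3, one_div, Real.rpow_rpow_inv hxp.le hp'.ne'] at hsub
      have h4 : ‖x n‖ / ‖v‖ * fn v ≤ a * ‖x n‖ := by rw [← hval]; linarith
      have h5 := mul_le_mul_of_nonneg_right h4 (le_of_lt (div_pos hvp ht0))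
      calc fn v = (‖x n‖ / ‖v‖ * fn v) * (‖v‖ / ‖x n‖) := by
            field_simp
          _ ≤ (a * ‖x n‖) * (‖v‖ / ‖x n‖) := h5
          _ = a * ‖v‖ := by field_simp
  refine ContinuousLinearMap.opNorm_le_bound _ ha0 ?_
  intro v
  rw [Real.norm_eq_abs, abs_le]
  constructor
  · have h6 := hbound (-v)
    rw [map_neg, norm_neg] at h6
    linarith
  · exact hbound v

end Core3

section Lower
variable {E : ℕ → Type*} [∀ n, NormedAddCommGroup (E n)] [∀ n, NormedSpace ℝ (E n)]
  [∀ n, CompleteSpace (E n)]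

lemma scrD_factor_le (P : ℝ≥0∞) [Fact (1 ≤ P)] (hP : 0 < P.toReal) (n : ℕ)
    [Nontrivial (E n)] : scrD (E n) ≤ scrD (lp E P) := by
  have hP0 : P ≠ 0 := by
    intro h; rw [h] at hP; simp at hP
  refine csSup_le ?_ ?_
  · obtain ⟨x, hx⟩ := exists_ne (0 : E n)
    exact ⟨_, ⟨x, hx, rfl⟩⟩
  rintro d ⟨x, hx : x ≠ 0, rfl⟩
  -- map f ∈ J(x) to F = f ∘ proj ∈ J(single n x)
  set X := lp E P
  have hxnorm : (0:ℝ) < ‖x‖ := norm_pos_iff.mpr hx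
  set z : X := lp.single P n x with hz
  have hznorm : ‖z‖ = ‖x‖ := norm_lpsingle P hP n x
  have hzne : z ≠ 0 := by
    intro h
    apply hx
    have : ‖z‖ = 0 := by rw [h, norm_zero]
    rw [hznorm] at this
    exact norm_eq_zero.mp this
  have key : ∀ f : E n →L[ℝ] ℝ, ‖f‖ = 1 → f x = ‖x‖ →
      (f.comp (projCLM E P hP0 n)) ∈ {F : X →L[ℝ] ℝ | ‖F‖ = 1 ∧ F z = ‖z‖} := by
    intro f hf1 hfx
    constructor
    · refine le_antisymm ?_ ?_
      · refine ContinuousLinearMap.opNorm_le_bound _ zero_le_one ?_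
        intro y
        have h1 : ‖f (y n)‖ ≤ ‖f‖ * ‖y n‖ := f.le_opNorm _
        have h2 : ‖(y : ∀ i, E i) n‖ ≤ ‖y‖ := lp.norm_apply_le_norm hP0 y n
        calc ‖(f.comp (projCLM E P hP0 n)) y‖ = ‖f (y n)‖ := rfl
          _ ≤ ‖f‖ * ‖y n‖ := h1
          _ = ‖y n‖ := by rw [hf1, one_mul]
          _ ≤ ‖y‖ := h2
          _ = 1 * ‖y‖ := (one_mul _).symm
      · have h3 : (f.comp (projCLM E P hP0 n)) z = f x := by
          simp [projCLM_apply, hz, lp.single_apply_self]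
        have := (f.comp (projCLM E P hP0 n)).ratio_le_opNorm z
        rw [h3, hfx, hznorm] at this
        rwa [Real.norm_eq_abs, abs_of_nonneg hxnorm.le, div_self hxnorm.ne'] at this
    · show (f.comp (projCLM E P hP0 n)) z = ‖z‖
      simp [projCLM_apply, hz, lp.single_apply_self, hfx, hznorm, norm_lpsingle P hP n x]
  refine Metric.diam_le_of_forall_dist_le (le_trans Metric.diam_nonneg (diam_le_scrD hzne)) ?_
  intro f hf g hg
  obtain ⟨hf1, hfx⟩ := hf
  obtain ⟨hg1, hgx⟩ := hg
  have hF := key f hf1 hfx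
  have hG := key g hg1 hgx
  have hdist : dist f g ≤ dist (f.comp (projCLM E P hP0 n)) (g.comp (projCLM E P hP0 n)) := by
    rw [dist_eq_norm, dist_eq_norm]
    refine ContinuousLinearMap.opNorm_le_bound _ (norm_nonneg _) ?_
    intro v
    have h4 : (f - g) v = ((f.comp (projCLM E P hP0 n)) - (g.comp (projCLM E P hP0 n)))
        (lp.single P n v) := by
      simp [ContinuousLinearMap.sub_apply, projCLM_apply, lp.single_apply_self]
    rw [h4]
    calc ‖_‖ ≤ ‖(f.comp (projCLM E P hP0 n)) - (g.comp (projCLM E P hP0 n))‖ *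
        ‖lp.single P n v‖ := ContinuousLinearMap.le_opNorm _ _
      _ = _ * ‖v‖ := by rw [norm_lpsingle P hP n v]
  refine hdist.trans ?_
  refine le_trans (Metric.dist_le_diam_of_mem (Jset_bounded z) hF hG) ?_
  exact diam_le_scrD hzne

end Lower

section Core4
variable {E : ℕ → Type*} [∀ n, NormedAddCommGroup (E n)] [∀ n, NormedSpace ℝ (E n)]
variable {P : ℝ≥0∞} [Fact (1 ≤ P)]

lemma coord_diff (h1p : 1 < P.toReal) (x : lp E P) (hx : x ≠ 0) (f g : lp E P →L[ℝ] ℝ)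
    (hf1 : ‖f‖ = 1) (hfx : f x = ‖x‖) (hg1 : ‖g‖ = 1) (hgx : g x = ‖x‖) (n : ℕ)
    {d : ℝ} (hd : 0 ≤ d)
    (hdiam : x n ≠ 0 →
      Metric.diam {h : E n →L[ℝ] ℝ | ‖h‖ = 1 ∧ h (x n) = ‖x n‖} ≤ d) :
    ‖f.comp (singleCLM E P (lt_trans one_pos h1p) n) -
        g.comp (singleCLM E P (lt_trans one_pos h1p) n)‖ ≤
      ‖x n‖ ^ (P.toReal - 1) / ‖x‖ ^ (P.toReal - 1) * d := by
  have hp' : (0:ℝ) < P.toReal := lt_trans one_pos h1p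
  set q := P.toReal with hq
  set fn := f.comp (singleCLM E P hp' n) with hfn
  set gn := g.comp (singleCLM E P hp' n) with hgn
  have hxp : (0:ℝ) < ‖x‖ := norm_pos_iff.mpr hx
  set a := ‖x n‖ ^ (q - 1) / ‖x‖ ^ (q - 1) with ha
  have hnf : ‖fn‖ ≤ a := coord_norm h1p x hx f hf1 hfx n
  have hng : ‖gn‖ ≤ a := coord_norm h1p x hx g hg1 hgx n
  by_cases hxn : x n = 0
  · have ha' : a = 0 := by
      rw [ha, hxn, norm_zero, Real.zero_rpow (by dsimp only [q]; linarith : q - 1 ≠ 0), zero_div]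
    have h1 : ‖fn - gn‖ ≤ 0 := by
      calc ‖fn - gn‖ ≤ ‖fn‖ + ‖gn‖ := norm_sub_le _ _
        _ ≤ a + a := add_le_add hnf hng
        _ = 0 := by rw [ha']; ring
    calc ‖fn - gn‖ ≤ 0 := h1
      _ ≤ a * d := by rw [ha', zero_mul]
  · have ht0 : (0:ℝ) < ‖x n‖ := norm_pos_iff.mpr hxn
    have hapos : (0:ℝ) < a := by rw [ha]; positivity
    have hfval : fn (x n) = a * ‖x n‖ := by
      rw [hfn, ha, hq]; exact coord_value h1p x hx f hf1 hfx n
    have hgval : gn (x n) = a * ‖x n‖ := by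
      rw [hgn, ha, hq]; exact coord_value h1p x hx g hg1 hgx n
    have hmem : ∀ hh : E n →L[ℝ] ℝ, ‖hh‖ ≤ a → hh (x n) = a * ‖x n‖ →
        (a⁻¹ • hh) ∈ {h : E n →L[ℝ] ℝ | ‖h‖ = 1 ∧ h (x n) = ‖x n‖} := by
      intro hh hn hv
      have hval : (a⁻¹ • hh) (x n) = ‖x n‖ := by
        rw [ContinuousLinearMap.smul_apply, hv, smul_eq_mul]
        field_simp
      constructor
      · refine le_antisymm ?_ ?_
        · calc ‖a⁻¹ • hh‖ ≤ ‖a⁻¹‖ * ‖hh‖ := ContinuousLinearMap.opNorm_smul_le _ _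
            _ ≤ ‖a⁻¹‖ * a := mul_le_mul_of_nonneg_left hn (norm_nonneg _)
            _ = 1 := by
                rw [norm_inv, Real.norm_eq_abs, abs_of_pos hapos]
                field_simp
        · have := (a⁻¹ • hh).ratio_le_opNorm (x n)
          rw [hval, Real.norm_eq_abs, abs_of_pos ht0, div_self ht0.ne'] at this
          exact this
      · exact hval
    have hFmem := hmem fn hnf hfval
    have hGmem := hmem gn hng hgval
    have hdist : dist (a⁻¹ • fn) (a⁻¹ • gn) ≤ d :=
      le_trans (Metric.dist_le_diam_of_mem (Jset_bounded (x n)) hFmem hGmem) (hdiam hxn)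
    have hrepr : fn - gn = a • (a⁻¹ • fn - a⁻¹ • gn) := by
      rw [smul_sub, smul_inv_smul₀ hapos.ne', smul_inv_smul₀ hapos.ne']
    calc ‖fn - gn‖ = ‖a • (a⁻¹ • fn - a⁻¹ • gn)‖ := by rw [← hrepr]
      _ ≤ ‖a‖ * ‖a⁻¹ • fn - a⁻¹ • gn‖ := ContinuousLinearMap.opNorm_smul_le _ _
      _ = a * dist (a⁻¹ • fn) (a⁻¹ • gn) := by
            rw [Real.norm_eq_abs, abs_of_pos hapos, dist_eq_norm]
      _ ≤ a * d := mul_le_mul_of_nonneg_left hdist hapos.le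

end Core4

section Core5
open Filter
variable {E : ℕ → Type*} [∀ n, NormedAddCommGroup (E n)] [∀ n, NormedSpace ℝ (E n)]
variable {P : ℝ≥0∞} [Fact (1 ≤ P)]

lemma main_lt (h1p : 1 < P.toReal)
    (hDn : ∀ n : ℕ, ∀ xn : E n, xn ≠ 0 →
      Metric.diam {h : E n →L[ℝ] ℝ | ‖h‖ = 1 ∧ h xn = ‖xn‖} ≤ 2 - 1 / ((n : ℝ) + 1))
    (x : lp E P) (hx : x ≠ 0) :
    Metric.diam {f : lp E P →L[ℝ] ℝ | ‖f‖ = 1 ∧ f x = ‖x‖} < 2 := by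
  have hp' : (0:ℝ) < P.toReal := lt_trans one_pos h1p
  have hPtop : P ≠ ⊤ := by
    intro h; rw [h] at hp'; simp at hp'
  set pp := P.toReal with hpp
  have hpq : pp.HolderConjugate (Real.conjExponent pp) := Real.HolderConjugate.conjExponent h1p
  set q := Real.conjExponent pp with hqdef
  have hq0 : (0:ℝ) < q := hpq.symm.pos
  have hxp : (0:ℝ) < ‖x‖ := norm_pos_iff.mpr hx
  set a : ℕ → ℝ := fun n => ‖x n‖ ^ (pp - 1) / ‖x‖ ^ (pp - 1) with ha
  set b : ℕ → ℝ := fun n => a n * (2 - 1 / ((n : ℝ) + 1)) with hb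
  have ha0 : ∀ n, 0 ≤ a n := fun n => by rw [ha]; positivity
  have heps : ∀ n : ℕ, 0 ≤ 2 - 1 / ((n : ℝ) + 1) := by
    intro n
    have h1 : 1 / ((n : ℝ) + 1) ≤ 1 := by
      rw [div_le_one (by positivity)]
      simp
    linarith
  have hb0 : ∀ n, 0 ≤ b n := fun n => mul_nonneg (ha0 n) (heps n)
  have hw : ∀ n, (a n) ^ q = ‖x n‖ ^ pp / ‖x‖ ^ pp := by
    intro n
    rw [ha]
    dsimp only
    rw [Real.div_rpow (Real.rpow_nonneg (norm_nonneg _) _) (Real.rpow_nonneg (norm_nonneg _) _),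
      ← Real.rpow_mul (norm_nonneg _), ← Real.rpow_mul (norm_nonneg _),
      hpq.sub_one_mul_conj]
  have hsumxp : Summable (fun n => ‖x n‖ ^ pp) := (lp.memℓp x).summable hp'
  have hsumw : Summable (fun n => ‖x n‖ ^ pp / ‖x‖ ^ pp) := hsumxp.div_const _
  have htsumw : ∑' n, ‖x n‖ ^ pp / ‖x‖ ^ pp = 1 := by
    rw [tsum_div_const, ← lp.norm_rpow_eq_tsum hp' x, div_self (by positivity)]
  have hsumaq : Summable (fun n => (a n) ^ q) := hsumw.congr (fun n => (hw n).symm)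
  have htsuma : ∑' n, (a n) ^ q = 1 := by rw [tsum_congr hw, htsumw]
  have hble : ∀ n, b n ≤ 2 * a n := by
    intro n
    rw [hb]
    dsimp only
    have h2 : 1 / ((n : ℝ) + 1) ≥ 0 := by positivity
    nlinarith [ha0 n]
  have hbq_le : ∀ n, (b n) ^ q ≤ 2 ^ q * (a n) ^ q := by
    intro n
    calc (b n) ^ q ≤ (2 * a n) ^ q := Real.rpow_le_rpow (hb0 n) (hble n) hq0.le
      _ = 2 ^ q * (a n) ^ q := Real.mul_rpow (by norm_num) (ha0 n)
  have hsumbq : Summable (fun n => (b n) ^ q) :=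
    Summable.of_nonneg_of_le (fun n => Real.rpow_nonneg (hb0 n) _) hbq_le (hsumaq.mul_left _)
  set S := ∑' n, (b n) ^ q with hS
  have hS0 : 0 ≤ S := tsum_nonneg (fun n => Real.rpow_nonneg (hb0 n) _)
  have hSlt : S < 2 ^ q := by
    obtain ⟨m, hm⟩ : ∃ m, x m ≠ 0 := by
      by_contra hcon
      push_neg at hcon
      apply hx
      refine lp.ext ?_
      rw [lp.coeFn_zero]
      funext n
      exact hcon n
    have ham : 0 < a m := by
      rw [ha]
      have := norm_pos_iff.mpr hm
      dsimp only
      positivity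
    have hstrict : (b m) ^ q < 2 ^ q * (a m) ^ q := by
      have hlt : b m < 2 * a m := by
        rw [hb]
        dsimp only
        have h2 : (0:ℝ) < 1 / ((m : ℝ) + 1) := by positivity
        nlinarith
      calc (b m) ^ q < (2 * a m) ^ q := Real.rpow_lt_rpow (hb0 m) hlt hq0
        _ = 2 ^ q * (a m) ^ q := Real.mul_rpow (by norm_num) (ha0 m)
    calc S < ∑' n, 2 ^ q * (a n) ^ q := Summable.tsum_lt_tsum hbq_le hstrict hsumbq (hsumaq.mul_left _)
      _ = 2 ^ q := by rw [tsum_mul_left, htsuma, mul_one]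
  have hnormbound : ∀ f g : lp E P →L[ℝ] ℝ, ‖f‖ = 1 → f x = ‖x‖ → ‖g‖ = 1 → g x = ‖x‖ →
      ‖f - g‖ ≤ S ^ (1 / q) := by
    intro f g hf1 hfx hg1 hgx
    refine ContinuousLinearMap.opNorm_le_bound _ (Real.rpow_nonneg hS0 _) ?_
    intro y
    have hY : HasSum (fun n => lp.single P n (y n)) y := lp.hasSum_single hPtop y
    have hΔ : HasSum (fun n => (f - g) (lp.single P n (y n))) ((f - g) y) := hY.mapL (f - g)
    have hterm : ∀ n, ‖(f - g) (lp.single P n (y n))‖ ≤ b n * ‖y n‖ := by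
      intro n
      have hcomp : (f - g) (lp.single P n (y n)) =
          (f.comp (singleCLM E P hp' n) - g.comp (singleCLM E P hp' n)) (y n) := rfl
      rw [hcomp]
      have hc := coord_diff h1p x hx f g hf1 hfx hg1 hgx n (heps n) (fun hxn => hDn n (x n) hxn)
      calc ‖(f.comp (singleCLM E P hp' n) - g.comp (singleCLM E P hp' n)) (y n)‖
          ≤ ‖f.comp (singleCLM E P hp' n) - g.comp (singleCLM E P hp' n)‖ * ‖y n‖ :=
            ContinuousLinearMap.le_opNorm _ _
        _ ≤ b n * ‖y n‖ := by
            refine mul_le_mul_of_nonneg_right ?_ (norm_nonneg _)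
            exact hc
    have hsumyp : Summable (fun n => ‖y n‖ ^ pp) := (lp.memℓp y).summable hp'
    have hsumby : Summable (fun n => b n * ‖y n‖) :=
      Real.summable_mul_of_Lp_Lq_of_nonneg hpq.symm hb0 (fun n => norm_nonneg _) hsumbq hsumyp
    have hsumabs : Summable (fun n => ‖(f - g) (lp.single P n (y n))‖) :=
      Summable.of_nonneg_of_le (fun n => norm_nonneg _) hterm hsumby
    have h1 : ‖(f - g) y‖ ≤ ∑' n, ‖(f - g) (lp.single P n (y n))‖ := by
      rw [← hΔ.tsum_eq]
      exact norm_tsum_le_tsum_norm hsumabs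
    have h2 : (∑' n, ‖(f - g) (lp.single P n (y n))‖) ≤ ∑' n, b n * ‖y n‖ :=
      Summable.tsum_le_tsum hterm hsumabs hsumby
    have h3 : (∑' n, b n * ‖y n‖) ≤
        (∑' n, (b n) ^ q) ^ (1 / q) * (∑' n, ‖y n‖ ^ pp) ^ (1 / pp) :=
      Real.inner_le_Lp_mul_Lq_tsum_of_nonneg hpq.symm hb0 (fun n => norm_nonneg _) hsumbq hsumyp
    have h4 : (∑' n, ‖y n‖ ^ pp) ^ (1 / pp) = ‖y‖ := (lp.norm_eq_tsum_rpow hp' y).symm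
    calc ‖(f - g) y‖ ≤ ∑' n, ‖(f - g) (lp.single P n (y n))‖ := h1
      _ ≤ ∑' n, b n * ‖y n‖ := h2
      _ ≤ (∑' n, (b n) ^ q) ^ (1 / q) * (∑' n, ‖y n‖ ^ pp) ^ (1 / pp) := h3
      _ = S ^ (1 / q) * ‖y‖ := by rw [h4, ← hS]
  have hdiam : Metric.diam {f : lp E P →L[ℝ] ℝ | ‖f‖ = 1 ∧ f x = ‖x‖} ≤ S ^ (1 / q) := by
    refine Metric.diam_le_of_forall_dist_le (Real.rpow_nonneg hS0 _) ?_
    intro f hf g hg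
    rw [dist_eq_norm]
    exact hnormbound f g hf.1 hf.2 hg.1 hg.2
  refine lt_of_le_of_lt hdiam ?_
  have hfin : S ^ (1 / q) < (2 ^ q) ^ (1 / q) :=
    Real.rpow_lt_rpow hS0 hSlt (by positivity)
  rw [one_div] at hfin ⊢
  rwa [Real.rpow_rpow_inv (by norm_num) hq0.ne'] at hfin

end Core5

/-- If (E_n) is a sequence of Banach spaces with 𝒟(E_n) = 2 - 1/n (indexing from 1),
then for 1 < p < ∞ the Banach space ⊕_p E_n satisfies D(x) < 2 for every nonzero x
(every nonzero element is approximately smooth) while 𝒟(⊕_p E_n) = 2 (the space is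
not approximately smooth). -/
theorem stmt10 (E : ℕ → Type*) [∀ n, NormedAddCommGroup (E n)]
    [∀ n, NormedSpace ℝ (E n)] [∀ n, CompleteSpace (E n)] [∀ n, Nontrivial (E n)]
    (hD : ∀ n : ℕ, scrD (E n) = 2 - 1 / (n + 1))
    (p : ℝ) (hp : 1 < p) [Fact (1 ≤ ENNReal.ofReal p)] :
    (∀ x : lp E (ENNReal.ofReal p), x ≠ 0 →
        Metric.diam {f : (lp E (ENNReal.ofReal p)) →L[ℝ] ℝ | ‖f‖ = 1 ∧ f x = ‖x‖} < 2) ∧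
      scrD (lp E (ENNReal.ofReal p)) = 2 := by
  have hp0 : (0:ℝ) ≤ p := le_of_lt (lt_trans one_pos hp)
  have hPt : (ENNReal.ofReal p).toReal = p := ENNReal.toReal_ofReal hp0
  have h1p : 1 < (ENNReal.ofReal p).toReal := by rw [hPt]; exact hp
  have hp' : (0:ℝ) < (ENNReal.ofReal p).toReal := lt_trans one_pos h1p
  have hDn : ∀ n : ℕ, ∀ xn : E n, xn ≠ 0 →
      Metric.diam {h : E n →L[ℝ] ℝ | ‖h‖ = 1 ∧ h xn = ‖xn‖} ≤ 2 - 1 / ((n : ℝ) + 1) := by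
    intro n xn hxn
    rw [← hD n]
    exact diam_le_scrD hxn
  constructor
  · exact fun x hx => main_lt h1p hDn x hx
  · haveI hnt : Nontrivial (lp E (ENNReal.ofReal p)) := by
      obtain ⟨v, hv⟩ := exists_ne (0 : E 0)
      refine ⟨lp.single (ENNReal.ofReal p) 0 v, 0, ?_⟩
      intro h
      apply hv
      have h2 : ‖lp.single (ENNReal.ofReal p) 0 v‖ = ‖v‖ := norm_lpsingle _ hp' 0 v
      rw [h, norm_zero] at h2
      exact norm_eq_zero.mp h2.symm
    refine le_antisymm scrD_le_two ?_
    have hlow : ∀ n : ℕ, 2 - 1 / ((n:ℝ) + 1) ≤ scrD (lp E (ENNReal.ofReal p)) := by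
      intro n
      rw [← hD n]
      exact scrD_factor_le _ hp' n
    have htend : Filter.Tendsto (fun n : ℕ => 2 - 1 / ((n:ℝ) + 1)) Filter.atTop (nhds 2) := by
      have h3 := tendsto_one_div_add_atTop_nhds_zero_nat (𝕜 := ℝ)
      simpa using (tendsto_const_nhds (x := (2:ℝ))).sub h3
    exact le_of_tendsto' htend hlow
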